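/- Van der Corput's lemma (first derivative version): Let φ, ψ : [a,b] → ℝ with φ differentiable, φ' monotone on [a,b], and |φ'(t)| ≥ λ > 0 for all t ∈ [a,b], and ψ continuously differentiable. Then |∫ₐᵇ e^{iφ(t)} ψ(t) dt| ≤ C·λ^{-1}·(‖ψ‖_{L^∞([a,b])} + ‖ψ'‖_{L¹([a,b])}) for an absolute constant C. -/

import Mathlib

open MeasureTheory Set Complex intervalIntegral

lemma vdc_norm_exp (x : ℝ) : ‖Complex.exp (Complex.I * (x:ℂ))‖ = 1 := by
  rw [Complex.norm_exp]
  simp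

lemma vdc_deriv (φ φ' : ℝ → ℝ) (t : ℝ) (h : HasDerivAt φ (φ' t) t) :
    HasDerivAt (fun u => -Complex.I * Complex.exp (Complex.I * (φ u : ℂ)))
      (Complex.exp (Complex.I * (φ t : ℂ)) * (φ' t : ℂ)) t := by
  have h1 : HasDerivAt (fun u => Complex.I * (φ u : ℂ)) (Complex.I * (φ' t : ℂ)) t :=
    (h.ofReal_comp).const_mul Complex.I
  have h2 := h1.cexp.const_mul (-Complex.I)
  convert h2 using 1
  · rfl
  have := Complex.I_mul_I
  linear_combination (Complex.exp (Complex.I * (φ t : ℂ)) * (φ' t : ℂ)) * this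


lemma vdc_core_pos (a b lam : ℝ) (φ φ' : ℝ → ℝ) (hab : a ≤ b) (hlam : 0 < lam)
    (hφ : ∀ t ∈ Set.Icc a b, HasDerivAt φ (φ' t) t)
    (hm : MonotoneOn φ' (Set.Icc a b) ∨ AntitoneOn φ' (Set.Icc a b))
    (hpos : ∀ t ∈ Set.Icc a b, lam ≤ φ' t) :
    ‖∫ t in a..b, Complex.exp (Complex.I * (φ t : ℂ))‖ ≤ 2 * lam⁻¹ := by
  set M : ℝ := lam⁻¹ with hM
  have hM0 : 0 ≤ M := le_of_lt (by positivity)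
  set cl : ℝ → ℝ := fun t => max a (min b t) with hcl
  have hclmem : ∀ t, cl t ∈ Set.Icc a b := fun t =>
    ⟨le_max_left _ _, max_le hab (min_le_left _ _)⟩
  have hcleq : ∀ t ∈ Set.Icc a b, cl t = t := by
    intro t ht
    simp only [hcl]
    rw [min_eq_right ht.2, max_eq_right ht.1]
  have hclmono : Monotone cl := fun s t hst =>
    max_le_max le_rfl (min_le_min le_rfl hst)
  have hclcont : Continuous cl := continuous_const.max (continuous_const.min continuous_id)
  -- positivity of φ' on Icc
  have hpos' : ∀ t, 0 < φ' (cl t) := fun t => lt_of_lt_of_le hlam (hpos _ (hclmem t))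
  set g : ℝ → ℝ := fun t => (φ' (cl t))⁻¹ with hg
  have hgpos : ∀ t, 0 < g t := fun t => inv_pos.2 (hpos' t)
  have hgle : ∀ t, g t ≤ M := fun t =>
    inv_anti₀ hlam (hpos _ (hclmem t))
  -- g is monotone or antitone
  have hφcl : Monotone (fun t => φ' (cl t)) ∨ Antitone (fun t => φ' (cl t)) := by
    rcases hm with h | h
    · exact Or.inl (fun s t hst => h (hclmem s) (hclmem t) (hclmono hst))
    · exact Or.inr (fun s t hst => h (hclmem s) (hclmem t) (hclmono hst))
  have hgm : Monotone g ∨ Antitone g := by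
    rcases hφcl with h | h
    · exact Or.inr (fun s t hst => inv_anti₀ (hpos' s) (h hst))
    · exact Or.inl (fun s t hst => inv_anti₀ (hpos' t) (h hst))
  have hgmeas : Measurable g := by
    rcases hgm with h | h
    · exact h.measurable
    · exact h.measurable
  have hφ'meas : Measurable (fun t => φ' (cl t)) := by
    rcases hφcl with h | h
    · exact h.measurable
    · exact h.measurable
  -- ordConnected level sets
  have hA : ∀ s : ℝ, Set.OrdConnected {t : ℝ | s < g t} := by
    intro s
    rcases hgm with h | h
    · exact ⟨fun x hx y hy z hz => lt_of_lt_of_le hx (h hz.1)⟩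
    · exact ⟨fun x hx y hy z hz => lt_of_lt_of_le hy (h hz.2)⟩
  -- continuity of φ ∘ cl
  have hφcont : ContinuousOn φ (Set.Icc a b) := fun t ht =>
    (hφ t ht).continuousAt.continuousWithinAt
  have hφclcont : Continuous (fun t => φ (cl t)) :=
    hφcont.comp_continuous hclcont hclmem
  -- bound on φ' ∘ cl
  set K : ℝ := |φ' a| ⊔ |φ' b| with hKdef
  have hK0 : 0 ≤ K := le_trans (abs_nonneg _) le_sup_left
  have haI : a ∈ Set.Icc a b := ⟨le_rfl, hab⟩
  have hbI : b ∈ Set.Icc a b := ⟨hab, le_rfl⟩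
  have hK : ∀ t, |φ' (cl t)| ≤ K := by
    intro t
    rcases hm with h | h
    · have h1 := h haI (hclmem t) (hclmem t).1
      have h2 := h (hclmem t) hbI (hclmem t).2
      rw [abs_le]
      constructor
      · calc -K ≤ -|φ' a| := neg_le_neg le_sup_left
          _ ≤ φ' a := neg_abs_le _
          _ ≤ _ := h1
      · exact le_trans h2 (le_trans (le_abs_self _) le_sup_right)
    · have h1 := h haI (hclmem t) (hclmem t).1
      have h2 := h (hclmem t) hbI (hclmem t).2
      rw [abs_le]
      constructor
      · calc -K ≤ -|φ' b| := neg_le_neg le_sup_right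
          _ ≤ φ' b := neg_abs_le _
          _ ≤ _ := h2
      · exact le_trans h1 (le_trans (le_abs_self _) le_sup_left)
  -- the integrand pieces
  set E : ℝ → ℂ := fun t => Complex.exp (Complex.I * (φ (cl t) : ℂ)) * (φ' (cl t) : ℂ) with hE
  have hEmeas : Measurable E := by
    apply Measurable.mul
    · exact (Complex.continuous_exp.comp
        (continuous_const.mul (Complex.continuous_ofReal.comp hφclcont))).measurable
    · exact Complex.measurable_ofReal.comp hφ'meas
  have hEbound : ∀ t, ‖E t‖ ≤ K := by
    intro t
    rw [hE]
    simp only [norm_mul, vdc_norm_exp, one_mul, Complex.norm_real, Real.norm_eq_abs]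
    exact hK t
  set f : ℝ → ℝ → ℂ := fun t s => if s < g t then E t else 0 with hf
  -- finiteness instances
  haveI h1fin : IsFiniteMeasure (volume.restrict (Set.Ioc a b)) := by
    constructor
    rw [Measure.restrict_apply_univ, Real.volume_Ioc]
    exact ENNReal.ofReal_lt_top
  haveI h2fin : IsFiniteMeasure (volume.restrict (Set.Ioc (0:ℝ) M)) := by
    constructor
    rw [Measure.restrict_apply_univ, Real.volume_Ioc]
    exact ENNReal.ofReal_lt_top
  -- integrability on the product
  have hint : Integrable (Function.uncurry f)
      ((volume.restrict (Set.Ioc a b)).prod (volume.restrict (Set.Ioc (0:ℝ) M))) := by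
    have hmeas : Measurable (Function.uncurry f) := by
      apply Measurable.ite
      · exact measurableSet_lt measurable_snd (hgmeas.comp measurable_fst)
      · exact hEmeas.comp measurable_fst
      · exact measurable_const
    refine (integrable_const K).mono' hmeas.aestronglyMeasurable (ae_of_all _ ?_)
    rintro ⟨t, s⟩
    simp only [Function.uncurry, hf]
    split
    · exact hEbound t
    · simp [hK0]
  -- Step A : inner integral in s
  have stepA : ∀ t ∈ Set.Icc a b,
      (∫ s in Set.Ioc (0:ℝ) M, f t s) = Complex.exp (Complex.I * (φ t : ℂ)) := by
    intro t ht
    have h1 : (fun s => f t s) = Set.indicator (Set.Iio (g t)) (fun _ => E t) := by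
      funext s
      rw [hf]
      simp only [Set.indicator_apply, Set.mem_Iio]
    rw [h1, MeasureTheory.integral_indicator measurableSet_Iio, Measure.restrict_restrict measurableSet_Iio,
      setIntegral_const]
    have hset : Set.Iio (g t) ∩ Set.Ioc (0:ℝ) M = Set.Ioo 0 (g t) := by
      ext x
      simp only [Set.mem_inter_iff, Set.mem_Iio, Set.mem_Ioc, Set.mem_Ioo]
      constructor
      · rintro ⟨h1, h2, h3⟩; exact ⟨h2, h1⟩
      · rintro ⟨h1, h2⟩; exact ⟨h2, h1, le_trans (le_of_lt h2) (hgle t)⟩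
    rw [hset, Real.volume_real_Ioo_of_le (le_of_lt (hgpos t)), sub_zero]
    have hclt : cl t = t := hcleq t ht
    have hne : (φ' t : ℂ) ≠ 0 := by
      exact_mod_cast ne_of_gt (lt_of_lt_of_le hlam (hpos t ht))
    simp only [hg, hE, hclt, Complex.real_smul, Complex.ofReal_inv]
    field_simp
  -- Step B : inner integral in t is bounded by 2
  have stepB : ∀ s : ℝ, ‖∫ t in Set.Ioc a b, f t s‖ ≤ 2 := by
    intro s
    have h1 : (fun t => f t s) = Set.indicator {t : ℝ | s < g t} E := by
      funext t
      rw [hf]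
      simp only [Set.indicator_apply, Set.mem_setOf_eq]
    have hAmeas : MeasurableSet {t : ℝ | s < g t} := measurableSet_lt measurable_const hgmeas
    rw [h1, MeasureTheory.integral_indicator hAmeas, Measure.restrict_restrict hAmeas]
    set D : Set ℝ := {t : ℝ | s < g t} ∩ Set.Ioc a b with hD
    rcases Set.eq_empty_or_nonempty D with hDe | hDne
    · rw [hDe]; simp
    have hDsub : D ⊆ Set.Icc a b := fun x hx => Set.Ioc_subset_Icc_self hx.2
    have hbdd : BddBelow D := ⟨a, fun x hx => (hDsub hx).1⟩
    have hbdd2 : BddAbove D := ⟨b, fun x hx => (hDsub hx).2⟩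
    set c : ℝ := sInf D with hc
    set d : ℝ := sSup D with hd
    have hcd : c ≤ d := csInf_le_csSup hDne hbdd hbdd2
    have hcmem : c ∈ Set.Icc a b := by
      constructor
      · exact le_csInf hDne (fun x hx => (hDsub hx).1)
      · obtain ⟨x, hx⟩ := hDne
        exact le_trans (csInf_le hbdd hx) (hDsub hx).2
    have hdmem : d ∈ Set.Icc a b := by
      constructor
      · obtain ⟨x, hx⟩ := hDne
        exact le_trans (hDsub hx).1 (le_csSup hbdd2 hx)
      · exact csSup_le hDne (fun x hx => (hDsub hx).2)
    have hDoc : Set.OrdConnected D := (hA s).inter Set.ordConnected_Ioc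
    have hIoo : Set.Ioo c d ⊆ D := by
      intro x hx
      obtain ⟨u, hu, hux⟩ := exists_lt_of_csInf_lt hDne hx.1
      obtain ⟨v, hv, hxv⟩ := exists_lt_of_lt_csSup hDne hx.2
      exact hDoc.out hu hv ⟨le_of_lt hux, le_of_lt hxv⟩
    have hDIcc : D ⊆ Set.Icc c d := fun x hx => ⟨csInf_le hbdd hx, le_csSup hbdd2 hx⟩
    have haeeq : D =ᵐ[volume] Set.Ioo c d := by
      rw [MeasureTheory.ae_eq_set]
      constructor
      · refine measure_mono_null ?_
          (((Set.countable_singleton d).insert c).measure_zero volume)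
        intro x hx
        have h2 := hDIcc hx.1
        have h3 := hx.2
        simp only [Set.mem_Ioo, not_and_or, not_lt] at h3
        simp only [Set.mem_insert_iff, Set.mem_singleton_iff]
        rcases h3 with h3 | h3
        · exact Or.inl (le_antisymm h2.1 h3).symm
        · exact Or.inr (le_antisymm h3 h2.2).symm
      · rw [Set.diff_eq_empty.2 hIoo]
        exact measure_empty
    rw [setIntegral_congr_set haeeq, ← integral_Ioc_eq_integral_Ioo,
      ← intervalIntegral.integral_of_le hcd]
    have hsub : Set.uIcc c d ⊆ Set.Icc a b := by
      rw [Set.uIcc_of_le hcd]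
      exact Set.Icc_subset_Icc hcmem.1 hdmem.2
    have hcongr : ∀ t ∈ Set.uIcc c d, E t = Complex.exp (Complex.I * (φ t : ℂ)) * (φ' t : ℂ) := by
      intro t ht
      simp only [hE, hcleq t (hsub ht)]
    rw [intervalIntegral.integral_congr hcongr]
    have hintcd : IntervalIntegrable (fun t => Complex.exp (Complex.I * (φ t : ℂ)) * (φ' t : ℂ))
        volume c d := by
      have hφ'int : IntervalIntegrable φ' volume c d := by
        rcases hm with h | h
        · exact (h.mono hsub).intervalIntegrable
        · exact (h.mono hsub).intervalIntegrable
      have hφ'intC : IntervalIntegrable (fun t => (φ' t : ℂ)) volume c d :=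
        ⟨hφ'int.1.ofReal, hφ'int.2.ofReal⟩
      apply hφ'intC.continuousOn_mul
      exact (Complex.continuous_exp.comp
        (continuous_const.mul Complex.continuous_ofReal)).comp_continuousOn (hφcont.mono hsub)
    rw [intervalIntegral.integral_eq_sub_of_hasDerivAt
      (fun t ht => vdc_deriv φ φ' t (hφ t (hsub ht))) hintcd]
    calc ‖-Complex.I * Complex.exp (Complex.I * (φ d : ℂ)) -
          -Complex.I * Complex.exp (Complex.I * (φ c : ℂ))‖
        ≤ ‖-Complex.I * Complex.exp (Complex.I * (φ d : ℂ))‖ +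
          ‖-Complex.I * Complex.exp (Complex.I * (φ c : ℂ))‖ := norm_sub_le _ _
      _ ≤ 2 := by
          simp only [norm_mul, norm_neg, Complex.norm_I, one_mul, vdc_norm_exp]
          norm_num
  -- assemble
  calc ‖∫ t in a..b, Complex.exp (Complex.I * (φ t : ℂ))‖
      = ‖∫ t in Set.Ioc a b, ∫ s in Set.Ioc (0:ℝ) M, f t s‖ := by
        rw [intervalIntegral.integral_of_le hab]
        congr 1
        apply setIntegral_congr_fun measurableSet_Ioc
        intro t ht
        exact (stepA t (Set.Ioc_subset_Icc_self ht)).symm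
    _ = ‖∫ s in Set.Ioc (0:ℝ) M, ∫ t in Set.Ioc a b, f t s‖ := by
        rw [integral_integral_swap hint]
    _ ≤ 2 * (volume (Set.Ioc (0:ℝ) M)).toReal := by
        apply norm_setIntegral_le_of_norm_le_const
        · rw [Real.volume_Ioc]; exact ENNReal.ofReal_lt_top
        · intro s hs
          exact stepB s
    _ ≤ 2 * lam⁻¹ := by
        rw [Real.volume_Ioc, sub_zero, ENNReal.toReal_ofReal hM0]

lemma vdc_core (a b lam : ℝ) (φ φ' : ℝ → ℝ) (hab : a ≤ b) (hlam : 0 < lam)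
    (hφ : ∀ t ∈ Set.Icc a b, HasDerivAt φ (φ' t) t)
    (hm : MonotoneOn φ' (Set.Icc a b) ∨ AntitoneOn φ' (Set.Icc a b))
    (habs : ∀ t ∈ Set.Icc a b, lam ≤ |φ' t|) :
    ‖∫ t in a..b, Complex.exp (Complex.I * (φ t : ℂ))‖ ≤ 2 * lam⁻¹ := by
  have hsign : (∀ t ∈ Set.Icc a b, lam ≤ φ' t) ∨ (∀ t ∈ Set.Icc a b, φ' t ≤ -lam) := by
    by_contra h
    push_neg at h
    obtain ⟨⟨t1, ht1, h1⟩, ⟨t2, ht2, h2⟩⟩ := h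
    have h1' : φ' t1 ≤ -lam := by
      rcases le_abs.1 (habs t1 ht1) with h | h
      · linarith
      · linarith
    have h2' : lam ≤ φ' t2 := by
      rcases le_abs.1 (habs t2 ht2) with h | h
      · exact h
      · linarith
    have hoc : Set.OrdConnected (φ' '' Set.Icc a b) :=
      Set.ordConnected_Icc.image_hasDerivWithinAt
        (fun x hx => (hφ x hx).hasDerivWithinAt)
    have h0 : (0 : ℝ) ∈ φ' '' Set.Icc a b := by
      apply hoc.out (Set.mem_image_of_mem φ' ht1) (Set.mem_image_of_mem φ' ht2)
      constructor <;> linarith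
    obtain ⟨t0, ht0, h0'⟩ := h0
    have := habs t0 ht0
    rw [h0'] at this
    simp at this
    linarith
  rcases hsign with hs | hs
  · exact vdc_core_pos a b lam φ φ' hab hlam hφ hm hs
  · have hneg : ∀ t ∈ Set.Icc a b, lam ≤ (-φ') t := by
      intro t ht
      have := hs t ht
      simp only [Pi.neg_apply]
      linarith
    have hφneg : ∀ t ∈ Set.Icc a b, HasDerivAt (-φ) ((-φ') t) t := by
      intro t ht
      simpa using (hφ t ht).neg
    have hmneg : MonotoneOn (-φ') (Set.Icc a b) ∨ AntitoneOn (-φ') (Set.Icc a b) := by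
      rcases hm with h | h
      · exact Or.inr (fun x hx y hy hxy => neg_le_neg (h hx hy hxy))
      · exact Or.inl (fun x hx y hy hxy => neg_le_neg (h hx hy hxy))
    have hb := vdc_core_pos a b lam (-φ) (-φ') hab hlam hφneg hmneg hneg
    have hconj : ∀ t : ℝ, Complex.exp (Complex.I * ((-φ) t : ℂ)) =
        (starRingEnd ℂ) (Complex.exp (Complex.I * (φ t : ℂ))) := by
      intro t
      rw [← Complex.exp_conj]
      congr 1
      simp [Complex.ext_iff]
    have hfun : (fun t => (starRingEnd ℂ) (Complex.exp (Complex.I * (φ t : ℂ)))) =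
        fun t => Complex.exp (Complex.I * ((-φ) t : ℂ)) := funext fun t => (hconj t).symm
    calc ‖∫ t in a..b, Complex.exp (Complex.I * (φ t : ℂ))‖
        = ‖(starRingEnd ℂ) (∫ t in a..b, Complex.exp (Complex.I * (φ t : ℂ)))‖ :=
          (RCLike.norm_conj _).symm
      _ = ‖∫ t in a..b, Complex.exp (Complex.I * ((-φ) t : ℂ))‖ := by
          congr 1
          rw [intervalIntegral.integral_of_le hab, intervalIntegral.integral_of_le hab,
            ← integral_conj, hfun]
      _ ≤ 2 * lam⁻¹ := hb

theorem stmt_14 :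
    ∃ C : ℝ, 0 < C ∧
      ∀ (a b lam : ℝ) (φ φ' ψ ψ' : ℝ → ℝ),
        a ≤ b → 0 < lam →
        (∀ t ∈ Set.Icc a b, HasDerivAt φ (φ' t) t) →
        (MonotoneOn φ' (Set.Icc a b) ∨ AntitoneOn φ' (Set.Icc a b)) →
        (∀ t ∈ Set.Icc a b, lam ≤ |φ' t|) →
        (∀ t ∈ Set.Icc a b, HasDerivAt ψ (ψ' t) t) →
        ContinuousOn ψ' (Set.Icc a b) →
        ‖∫ t in a..b, Complex.exp (Complex.I * (φ t : ℂ)) * (ψ t : ℂ)‖ ≤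
          C * lam⁻¹ * ((⨆ t : Set.Icc a b, |ψ (t : ℝ)|) + ∫ t in a..b, |ψ' t|) := by
  refine ⟨2, by norm_num, ?_⟩
  intro a b lam φ φ' ψ ψ' hab hlam hφ hm habs hψ hψ'
  set cl : ℝ → ℝ := fun t => max a (min b t) with hcl
  have hclmem : ∀ t, cl t ∈ Set.Icc a b := fun t =>
    ⟨le_max_left _ _, max_le hab (min_le_left _ _)⟩
  have hcleq : ∀ t ∈ Set.Icc a b, cl t = t := by
    intro t ht
    simp only [hcl]
    rw [min_eq_right ht.2, max_eq_right ht.1]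
  have hclcont : Continuous cl := continuous_const.max (continuous_const.min continuous_id)
  have hφcont : ContinuousOn φ (Set.Icc a b) := fun t ht =>
    (hφ t ht).continuousAt.continuousWithinAt
  have hψcont : ContinuousOn ψ (Set.Icc a b) := fun t ht =>
    (hψ t ht).continuousAt.continuousWithinAt
  set e : ℝ → ℂ := fun t => Complex.exp (Complex.I * (φ (cl t) : ℂ)) with he
  have hecont : Continuous e :=
    Complex.continuous_exp.comp (continuous_const.mul
      (Complex.continuous_ofReal.comp (hφcont.comp_continuous hclcont hclmem)))
  set Ψ : ℝ → ℂ := fun x => ∫ t in a..x, e t with hΨ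
  have hΨd : ∀ x : ℝ, HasDerivAt Ψ (e x) x := fun x =>
    (hecont.integral_hasStrictDerivAt a x).hasDerivAt
  have hΨcont : Continuous Ψ := by
    have : Differentiable ℝ Ψ := fun x => (hΨd x).differentiableAt
    exact this.continuous
  -- bound on Ψ
  have hΨbound : ∀ x ∈ Set.Icc a b, ‖Ψ x‖ ≤ 2 * lam⁻¹ := by
    intro x hx
    have hsub' : Set.Icc a x ⊆ Set.Icc a b := Set.Icc_subset_Icc le_rfl hx.2
    have hsub : Set.uIcc a x ⊆ Set.Icc a b := by
      rw [Set.uIcc_of_le hx.1]; exact hsub'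
    have hcongr : ∀ t ∈ Set.uIcc a x, e t = Complex.exp (Complex.I * (φ t : ℂ)) := by
      intro t ht
      simp only [he, hcleq t (hsub ht)]
    show ‖∫ t in a..x, e t‖ ≤ 2 * lam⁻¹
    rw [intervalIntegral.integral_congr hcongr]
    refine vdc_core a x lam φ φ' hx.1 hlam (fun t ht => hφ t (hsub' ht)) ?_
      (fun t ht => habs t (hsub' ht))
    rcases hm with h | h
    · exact Or.inl (h.mono hsub')
    · exact Or.inr (h.mono hsub')
  -- integration by parts
  have hbI : b ∈ Set.Icc a b := ⟨hab, le_rfl⟩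
  have hucont : ContinuousOn (fun t => (ψ t : ℂ)) (Set.uIcc a b) := by
    rw [Set.uIcc_of_le hab]
    exact Complex.continuous_ofReal.comp_continuousOn hψcont
  have hu' : IntervalIntegrable (fun t => (ψ' t : ℂ)) volume a b := by
    apply ContinuousOn.intervalIntegrable
    rw [Set.uIcc_of_le hab]
    exact Complex.continuous_ofReal.comp_continuousOn hψ'
  have hv' : IntervalIntegrable e volume a b := hecont.intervalIntegrable a b
  have hibp := intervalIntegral.integral_mul_deriv_eq_deriv_mul_of_hasDeriv_right
    hucont hΨcont.continuousOn
    (fun x hx => by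
      rw [min_eq_left hab, max_eq_right hab] at hx
      exact ((hψ x (Set.Ioo_subset_Icc_self hx)).ofReal_comp).hasDerivWithinAt)
    (fun x _ => (hΨd x).hasDerivWithinAt) hu' hv'
  have hΨa : Ψ a = 0 := intervalIntegral.integral_same
  have hgoal : (∫ t in a..b, Complex.exp (Complex.I * (φ t : ℂ)) * (ψ t : ℂ)) =
      (ψ b : ℂ) * Ψ b - ∫ x in a..b, (ψ' x : ℂ) * Ψ x := by
    have hcongr : ∀ t ∈ Set.uIcc a b,
        Complex.exp (Complex.I * (φ t : ℂ)) * (ψ t : ℂ) = (ψ t : ℂ) * e t := by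
      intro t ht
      rw [Set.uIcc_of_le hab] at ht
      simp only [he, hcleq t ht]
      ring
    rw [intervalIntegral.integral_congr hcongr, hibp, hΨa]
    ring
  -- sup bound
  set S : ℝ := ⨆ t : Set.Icc a b, |ψ (t : ℝ)| with hS
  have hbdd : BddAbove (Set.range fun t : Set.Icc a b => |ψ (t : ℝ)|) := by
    obtain ⟨K, hKb⟩ := (isCompact_Icc.image_of_continuousOn hψcont.abs).bddAbove
    refine ⟨K, ?_⟩
    rintro y ⟨t, rfl⟩
    exact hKb (Set.mem_image_of_mem _ t.2)
  have hbS : |ψ b| ≤ S := le_ciSup hbdd ⟨b, hbI⟩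
  have hS0 : 0 ≤ S := le_trans (abs_nonneg _) hbS
  -- integral term bound
  have hΨψ'cont : ContinuousOn (fun x => (ψ' x : ℂ) * Ψ x) (Set.uIcc a b) := by
    rw [Set.uIcc_of_le hab]
    exact (Complex.continuous_ofReal.comp_continuousOn hψ').mul hΨcont.continuousOn
  have hint1 : ‖∫ x in a..b, (ψ' x : ℂ) * Ψ x‖ ≤ 2 * lam⁻¹ * ∫ t in a..b, |ψ' t| := by
    calc ‖∫ x in a..b, (ψ' x : ℂ) * Ψ x‖ ≤ ∫ x in a..b, ‖(ψ' x : ℂ) * Ψ x‖ :=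
          intervalIntegral.norm_integral_le_integral_norm hab
      _ ≤ ∫ x in a..b, 2 * lam⁻¹ * |ψ' x| := by
          apply intervalIntegral.integral_mono_on hab
          · exact (hΨψ'cont.norm).intervalIntegrable
          · apply ContinuousOn.intervalIntegrable
            rw [Set.uIcc_of_le hab]
            exact continuousOn_const.mul hψ'.abs
          · intro x hx
            rw [norm_mul, Complex.norm_real, Real.norm_eq_abs]
            calc |ψ' x| * ‖Ψ x‖ ≤ |ψ' x| * (2 * lam⁻¹) :=
                  mul_le_mul_of_nonneg_left (hΨbound x hx) (abs_nonneg _)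
              _ = 2 * lam⁻¹ * |ψ' x| := by ring
      _ = 2 * lam⁻¹ * ∫ t in a..b, |ψ' t| := intervalIntegral.integral_const_mul _ _
  have hI0 : 0 ≤ ∫ t in a..b, |ψ' t| :=
    intervalIntegral.integral_nonneg hab (fun x _ => abs_nonneg _)
  have hl0 : (0:ℝ) ≤ 2 * lam⁻¹ := by positivity
  rw [hgoal]
  calc ‖(ψ b : ℂ) * Ψ b - ∫ x in a..b, (ψ' x : ℂ) * Ψ x‖
      ≤ ‖(ψ b : ℂ) * Ψ b‖ + ‖∫ x in a..b, (ψ' x : ℂ) * Ψ x‖ := norm_sub_le _ _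
    _ ≤ S * (2 * lam⁻¹) + 2 * lam⁻¹ * ∫ t in a..b, |ψ' t| := by
        refine add_le_add ?_ hint1
        rw [norm_mul, Complex.norm_real, Real.norm_eq_abs]
        exact mul_le_mul hbS (hΨbound b hbI) (norm_nonneg _) hS0
    _ = 2 * lam⁻¹ * (S + ∫ t in a..b, |ψ' t|) := by ring
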